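/- Let B ⊆ (ℝ^q)^ℤ be an affine behavior, Φ a symmetric positive semidefinite matrix of size qL, and w̄ ∈ B a fixed trajectory. If for all w₁, w₂ ∈ B and all t, ∇Q_Φ(w₁ − w₂)(t) ≤ 0, then there exists for each t a symmetric matrix Ψ(t) of size q(L+1)+1, whose top-left q(L+1) × q(L+1) block equals ∇Φ, such that (w_{[t,t+L]}, 1)ᵀ Ψ(t) (w_{[t,t+L]}, 1) = ∇Q_Φ(w − w̄)(t) ≤ 0 for all w ∈ B. Explicitly, Ψ(t) has off-diagonal block −∇Φ·w̄_{[t,t+L+1]} and scalar block w̄_{[t,t+L+1]}ᵀ ∇Φ w̄_{[t,t+L+1]}. -/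
import Mathlib


open Matrix

/-- The stacked vector `w_{[t, t+L-1]}` of a trajectory, indexed by `Fin L × Fin q`. -/
def stack (q L : ℕ) (w : ℤ → Fin q → ℝ) (t : ℤ) : Fin L × Fin q → ℝ :=
  fun p => w (t + (p.1.val : ℤ)) p.2

/-- The quadratic difference form `Q_Φ(w)(t)`. -/
def qdf (q L : ℕ) (Φ : Matrix (Fin L × Fin q) (Fin L × Fin q) ℝ)
    (w : ℤ → Fin q → ℝ) (t : ℤ) : ℝ :=
  stack q L w t ⬝ᵥ Φ.mulVec (stack q L w t)

/-- The increment `∇Q_Φ(w)(t) = Q_Φ(w)(t+1) - Q_Φ(w)(t)`. -/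
def incr (q L : ℕ) (Φ : Matrix (Fin L × Fin q) (Fin L × Fin q) ℝ)
    (w : ℤ → Fin q → ℝ) (t : ℤ) : ℝ :=
  qdf q L Φ w (t + 1) - qdf q L Φ w t

/-- The matrix `∇Φ` of size `q(L+1)` inducing the increment of `Q_Φ`. -/
def nablaPhi (q L : ℕ) (Φ : Matrix (Fin L × Fin q) (Fin L × Fin q) ℝ) :
    Matrix (Fin (L + 1) × Fin q) (Fin (L + 1) × Fin q) ℝ :=
  fun p p' =>
    (if h : 1 ≤ p.1.val ∧ 1 ≤ p'.1.val then
        Φ (⟨p.1.val - 1, by have := p.1.isLt; omega⟩, p.2)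
          (⟨p'.1.val - 1, by have := p'.1.isLt; omega⟩, p'.2)
      else 0)
    - (if h : p.1.val < L ∧ p'.1.val < L then
        Φ (⟨p.1.val, h.1⟩, p.2) (⟨p'.1.val, h.2⟩, p'.2)
      else 0)

lemma sum_succ_zero {L q : ℕ} (f : Fin (L+1) × Fin q → ℝ)
    (h0 : ∀ k : Fin q, f (0, k) = 0) :
    ∑ p : Fin (L+1) × Fin q, f p = ∑ p : Fin L × Fin q, f (p.1.succ, p.2) := by
  rw [Fintype.sum_prod_type, Fin.sum_univ_succ, Fintype.sum_prod_type]
  simp [h0]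

lemma sum_cast_last {L q : ℕ} (f : Fin (L+1) × Fin q → ℝ)
    (h0 : ∀ k : Fin q, f (Fin.last L, k) = 0) :
    ∑ p : Fin (L+1) × Fin q, f p = ∑ p : Fin L × Fin q, f (p.1.castSucc, p.2) := by
  rw [Fintype.sum_prod_type, Fin.sum_univ_castSucc, Fintype.sum_prod_type]
  simp [h0]

lemma nablaPhi_symm (q L : ℕ) (Φ : Matrix (Fin L × Fin q) (Fin L × Fin q) ℝ)
    (hsym : Φ.IsSymm) (p p' : Fin (L + 1) × Fin q) :
    nablaPhi q L Φ p' p = nablaPhi q L Φ p p' := by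
  unfold nablaPhi
  congr 1
  · by_cases h : 1 ≤ p.1.val ∧ 1 ≤ p'.1.val
    · rw [dif_pos h, dif_pos (And.symm h), hsym.apply]
    · rw [dif_neg (fun hh => h (And.symm hh)), dif_neg h]
  · by_cases h : p.1.val < L ∧ p'.1.val < L
    · rw [dif_pos h, dif_pos (And.symm h), hsym.apply]
    · rw [dif_neg (fun hh => h (And.symm hh)), dif_neg h]

lemma incr_eq (q L : ℕ) (Φ : Matrix (Fin L × Fin q) (Fin L × Fin q) ℝ)
    (w : ℤ → Fin q → ℝ) (t : ℤ) :
    stack q (L + 1) w t ⬝ᵥ (nablaPhi q L Φ).mulVec (stack q (L + 1) w t)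
      = incr q L Φ w t := by
  simp only [dotProduct, mulVec, incr, qdf, nablaPhi, sub_mul, mul_sub,
    Finset.sum_sub_distrib, Finset.mul_sum]
  congr 1
  · rw [sum_succ_zero _ (by intro k; simp)]
    refine Finset.sum_congr rfl fun p _ => ?_
    rw [sum_succ_zero _ (by intro k; simp)]
    refine Finset.sum_congr rfl fun p' _ => ?_
    rw [dif_pos ⟨Nat.succ_le_succ (Nat.zero_le _), Nat.succ_le_succ (Nat.zero_le _)⟩]
    simp only [stack, Fin.val_succ, Nat.add_sub_cancel, Fin.eta]
    push_cast
    ring_nf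
  · rw [sum_cast_last _ (by intro k; simp)]
    refine Finset.sum_congr rfl fun p _ => ?_
    rw [sum_cast_last _ (by intro k; simp)]
    refine Finset.sum_congr rfl fun p' _ => ?_
    rw [dif_pos ⟨p.1.isLt, p'.1.isLt⟩]
    simp [stack, Fin.castSucc]

theorem stmt9 (q L : ℕ) (B : Set (ℤ → Fin q → ℝ))
    (haff : ∀ w₁ ∈ B, ∀ w₂ ∈ B, ∀ α : ℝ, α • w₁ + (1 - α) • w₂ ∈ B)
    (Φ : Matrix (Fin L × Fin q) (Fin L × Fin q) ℝ)
    (hsym : Φ.IsSymm) (hpsd : Φ.PosSemidef)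
    (wbar : ℤ → Fin q → ℝ) (hwbar : wbar ∈ B)
    (hdec : ∀ w₁ ∈ B, ∀ w₂ ∈ B, ∀ t : ℤ, incr q L Φ (w₁ - w₂) t ≤ 0) :
    ∀ t : ℤ,
      ∃ Ψ : Matrix ((Fin (L + 1) × Fin q) ⊕ Unit) ((Fin (L + 1) × Fin q) ⊕ Unit) ℝ,
        Ψ.IsSymm ∧
        (∀ p p' : Fin (L + 1) × Fin q, Ψ (Sum.inl p) (Sum.inl p') = nablaPhi q L Φ p p') ∧
        (∀ p : Fin (L + 1) × Fin q,
          Ψ (Sum.inl p) (Sum.inr ()) =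
            -((nablaPhi q L Φ).mulVec (stack q (L + 1) wbar t) p)) ∧
        Ψ (Sum.inr ()) (Sum.inr ()) =
          stack q (L + 1) wbar t ⬝ᵥ (nablaPhi q L Φ).mulVec (stack q (L + 1) wbar t) ∧
        ∀ w ∈ B,
          (Sum.elim (stack q (L + 1) w t) (fun _ => (1 : ℝ)) ⬝ᵥ
              Ψ.mulVec (Sum.elim (stack q (L + 1) w t) (fun _ => (1 : ℝ))))
            = incr q L Φ (w - wbar) t ∧
          incr q L Φ (w - wbar) t ≤ 0 := by
  intro t
  set M := nablaPhi q L Φ with hMdef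
  have hM : M.IsSymm := by
    ext p p'
    exact nablaPhi_symm q L Φ hsym p p'
  set vbar := stack q (L + 1) wbar t with hvbar
  refine ⟨Matrix.fromBlocks M (Matrix.of fun p _ => -(M.mulVec vbar p))
      (Matrix.of fun _ p' => -(M.mulVec vbar p')) (Matrix.of fun _ _ => vbar ⬝ᵥ M.mulVec vbar),
      ?_, ?_, ?_, ?_, ?_⟩
  · ext i j
    cases i with
    | inl p => cases j with
      | inl p' => simpa using nablaPhi_symm q L Φ hsym p p'
      | inr u => simp
    | inr u => cases j with
      | inl p' => simp
      | inr u' => simp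
  · intro p p'; simp
  · intro p; simp
  · simp
  · intro w hw
    have hle : incr q L Φ (w - wbar) t ≤ 0 := hdec w hw wbar hwbar t
    refine ⟨?_, hle⟩
    set v := stack q (L + 1) w t with hv
    have hst : stack q (L + 1) (w - wbar) t = v - vbar := rfl
    have hswap : vbar ⬝ᵥ M.mulVec v = v ⬝ᵥ M.mulVec vbar := by
      rw [Matrix.dotProduct_mulVec]
      conv_lhs => rw [← hM]
      rw [Matrix.vecMul_transpose, dotProduct_comm]
    rw [← incr_eq, hst]
    rw [Matrix.fromBlocks_mulVec]
    rw [sumElim_dotProduct_sumElim]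
    rw [← hMdef]
    simp only [Sum.elim_comp_inl, Sum.elim_comp_inr]
    have h1 : (Matrix.of fun (p : Fin (L+1) × Fin q) (_ : Unit) => -(M.mulVec vbar p)).mulVec
        (fun _ => (1:ℝ)) = -(M.mulVec vbar) := by
      funext p; simp [mulVec, dotProduct]
    have h2 : (Matrix.of fun (_ : Unit) p' => -(M.mulVec vbar p')).mulVec v
        = fun _ => -(M.mulVec vbar ⬝ᵥ v) := by
      funext u; simp [mulVec, dotProduct, neg_mul]
    have h3 : (Matrix.of fun (_ _ : Unit) => vbar ⬝ᵥ M.mulVec vbar).mulVec (fun _ => (1:ℝ))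
        = fun _ => vbar ⬝ᵥ M.mulVec vbar := by
      funext u; simp [mulVec, dotProduct]
    rw [h1, h2, h3]
    have hcomm : M.mulVec vbar ⬝ᵥ v = v ⬝ᵥ M.mulVec vbar := dotProduct_comm _ _
    have expand : (v - vbar) ⬝ᵥ M.mulVec (v - vbar)
        = v ⬝ᵥ M.mulVec v - v ⬝ᵥ M.mulVec vbar - vbar ⬝ᵥ M.mulVec v + vbar ⬝ᵥ M.mulVec vbar := by
      simp only [Matrix.mulVec_sub, dotProduct_sub, sub_dotProduct]
      ring
    have h4 : ∀ r : ℝ, (fun _ : Unit => (1:ℝ)) ⬝ᵥ (fun _ => r) = r := fun r => by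
      simp [dotProduct]
    have h5 : ((fun _ : Unit => -(M *ᵥ vbar ⬝ᵥ v)) + fun _ => vbar ⬝ᵥ M *ᵥ vbar)
        = fun _ : Unit => (-(M *ᵥ vbar ⬝ᵥ v) + vbar ⬝ᵥ M *ᵥ vbar) := rfl
    rw [h5, h4, dotProduct_add, dotProduct_neg, expand]
    linarith [hswap, hcomm]
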